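/- Let (X,d) be an ultrametric space generated by a labeled tree T with labeling l : X → [0,∞) (so that d = d_l), and let B be an open ball of (X,d). Then the subgraph of T induced on B is a tree (in particular it is connected), and the restriction d|_{B×B} coincides with the ultrametric generated by this induced tree together with the restricted labeling l|_B; in particular (B, d|_{B×B}) belongs to the class UGVL. -/

import Mathlib

/-- `d` is an ultrametric on `X`: a nonnegative, symmetric function vanishing
exactly on the diagonal and satisfying the strong triangle inequality. -/
def IsUltrametricOn {X : Type*} (d : X → X → ℝ) : Prop :=
  (∀ x y, 0 ≤ d x y) ∧ (∀ x y, d x y = d y x) ∧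
  (∀ x y, d x y = 0 ↔ x = y) ∧
  (∀ x y z, d x y ≤ max (d x z) (d z y))

/-- `B` is an open ball of the space `(X, d)`. -/
def IsOpenBallOf {X : Type*} (d : X → X → ℝ) (B : Set X) : Prop :=
  ∃ c : X, ∃ r : ℝ, 0 < r ∧ B = {x | d c x < r}

/-- `C` is a centered sphere of the space `(X, d)`. -/
def IsCenteredSphereOf {X : Type*} (d : X → X → ℝ) (C : Set X) : Prop :=
  ∃ c ∈ C, ∃ r : ℝ, 0 ≤ r ∧ C = {x | d x c = r} ∪ {c}

/-- The diameter `sup {d x y : x, y ∈ A}` of a subset `A` of `(X, d)`. -/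
noncomputable def setDiam {X : Type*} (d : X → X → ℝ) (A : Set X) : ℝ :=
  sSup {r | ∃ x ∈ A, ∃ y ∈ A, r = d x y}

/-- A space is locally finite if all of its open balls are finite sets. -/
def IsLocallyFiniteOn {X : Type*} (d : X → X → ℝ) : Prop :=
  ∀ B : Set X, IsOpenBallOf d B → B.Finite

/-- The maximum of the (nonnegative) labels of the vertices of a walk `p`. -/
def walkMax {X : Type*} {T : SimpleGraph X} (l : X → ℝ) {u v : X} (p : T.Walk u v) : ℝ :=
  (p.support.map l).foldr max 0

/-- The function `d` is generated by the tree `T` with nonnegative vertex labeling `l`,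
i.e. `d u u = 0` and, for `u ≠ v`, `d u v` is the maximum of the labels of the vertices
on the (unique) path joining `u` and `v` in `T`. -/
def GeneratedBy {X : Type*} (d : X → X → ℝ) (T : SimpleGraph X) (l : X → ℝ) : Prop :=
  T.IsTree ∧ (∀ x, 0 ≤ l x) ∧ (∀ u, d u u = 0) ∧
  ∀ u v : X, u ≠ v → ∀ p : T.Walk u v, p.IsPath → d u v = walkMax l p

/-- `(X, d)` belongs to the class UGVL: it is generated by some labeled tree. -/
def IsUGVL {X : Type*} (d : X → X → ℝ) : Prop :=
  ∃ (T : SimpleGraph X) (l : X → ℝ), GeneratedBy d T l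

lemma foldr_max_le {L : List ℝ} {M : ℝ} (h0 : 0 ≤ M) (h : ∀ a ∈ L, a ≤ M) :
    L.foldr max 0 ≤ M := by
  induction L with
  | nil => simpa
  | cons a t ih =>
    simp only [List.foldr_cons, max_le_iff]
    exact ⟨h a List.mem_cons_self, ih fun b hb => h b (List.mem_cons_of_mem _ hb)⟩

lemma le_foldr_max {L : List ℝ} {a : ℝ} (h : a ∈ L) : a ≤ L.foldr max 0 := by
  induction L with
  | nil => cases h
  | cons b t ih =>
    rcases List.mem_cons.1 h with rfl | h
    · exact le_max_left _ _
    · exact (ih h).trans (le_max_right _ _)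

lemma foldr_max_nonneg (L : List ℝ) : 0 ≤ L.foldr max 0 := by
  induction L with
  | nil => simp
  | cons b t ih => exact ih.trans (le_max_right _ _)

lemma walkMax_le_walkMax {X : Type*} {T : SimpleGraph X} (l : X → ℝ)
    {u v u' v' : X} (p : T.Walk u v) (q : T.Walk u' v')
    (hsub : ∀ w ∈ p.support, w ∈ q.support) : walkMax l p ≤ walkMax l q := by
  apply foldr_max_le (foldr_max_nonneg _)
  intro a ha
  obtain ⟨w, hw, rfl⟩ := List.mem_map.1 ha
  exact le_foldr_max (List.mem_map_of_mem (f := l) (hsub w hw))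

lemma reach_of_walk {X : Type*} {T : SimpleGraph X} {B : Set X} :
    ∀ {u v : X} (p : T.Walk u v) (hu : u ∈ B) (hv : v ∈ B),
      (∀ w ∈ p.support, w ∈ B) → (T.induce B).Reachable ⟨u, hu⟩ ⟨v, hv⟩
  | _, _, SimpleGraph.Walk.nil, _, _, _ => SimpleGraph.Reachable.refl _
  | _, _, @SimpleGraph.Walk.cons _ _ u b v h p, hu, hv, hp => by
    have hb : b ∈ B := hp b (by simp)
    have hadj : (T.induce B).Adj ⟨u, hu⟩ ⟨b, hb⟩ := h
    exact hadj.reachable.trans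
      (reach_of_walk p hb hv (fun w hw => hp w (by simp [hw])))

/-- If `(X, d)` is an ultrametric space generated by a labeled tree `(T, l)` and `B`
is an open ball of `(X, d)`, then the subgraph of `T` induced on `B` is a tree, the
restriction of `d` to `B` is generated by this induced tree with the restricted
labeling, and in particular `(B, d|_{B×B})` belongs to UGVL. -/
theorem stmt_12 {X : Type*} (d : X → X → ℝ) (hd : IsUltrametricOn d)
    (T : SimpleGraph X) (l : X → ℝ) (hgen : GeneratedBy d T l)
    (B : Set X) (hB : IsOpenBallOf d B) :
    (T.induce B).IsTree ∧
    GeneratedBy (fun u v : B => d u v) (T.induce B) (fun x : B => l x) ∧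
    IsUGVL (fun u v : B => d u v) := by
  obtain ⟨hnn, hsym, heq0, hstri⟩ := hd
  obtain ⟨htree, hl, hself, hpath⟩ := hgen
  classical
  obtain ⟨c, r, hr, rfl⟩ := hB
  have hc : c ∈ {x | d c x < r} := by simpa [(heq0 c c).2 rfl] using hr
  -- key: paths between points of the ball stay in the ball
  have key : ∀ (u v : X), d c u < r → d c v < r → ∀ p : T.Walk u v, p.IsPath →
      ∀ w ∈ p.support, d c w < r := by
    intro u v hu hv p hp w hw
    by_cases hwu : w = u
    · subst hwu; exact hu
    by_cases huv : u = v
    · subst huv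
      rw [SimpleGraph.Walk.isPath_iff_eq_nil.1 hp] at hw
      simp at hw
      exact absurd hw hwu
    have hduw : d u w ≤ walkMax l p := by
      rw [hpath u w (fun h => hwu h.symm) (p.takeUntil w hw) (hp.takeUntil hw)]
      exact walkMax_le_walkMax l _ _ (fun x hx => p.support_takeUntil_subset hw hx)
    have hduv : d u v = walkMax l p := hpath u v huv p hp
    have hless : d u v < r :=
      lt_of_le_of_lt (hstri u v c) (by rw [hsym u c]; exact max_lt hu hv)
    calc d c w ≤ max (d c u) (d u w) := hstri c w u
      _ ≤ max (d c u) (d u v) := max_le_max le_rfl (by rw [hduv]; exact hduw)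
      _ < r := max_lt hu hless
  set B : Set X := {x | d c x < r}
  let f : T.induce B ↪g T := SimpleGraph.Embedding.induce B
  have hfinj : Function.Injective f.toHom := f.injective
  haveI : Nonempty B := ⟨⟨c, hc⟩⟩
  have hconn : (T.induce B).Connected := by
    refine SimpleGraph.Connected.mk ?_
    rintro ⟨u, hu⟩ ⟨v, hv⟩
    obtain ⟨p, hp, -⟩ := htree.existsUnique_path u v
    exact reach_of_walk p hu hv (key u v hu hv p hp)
  have hacyc : (T.induce B).IsAcyclic := by
    intro a q hq
    exact htree.IsAcyclic _ (hq.map (f := f.toHom) hfinj)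
  have htree' : (T.induce B).IsTree := ⟨hconn, hacyc⟩
  have hgen' : GeneratedBy (fun u v : B => d u v) (T.induce B) (fun x : B => l x) := by
    refine ⟨htree', fun x => hl x, fun u => hself u, ?_⟩
    rintro u v huv p hp
    have huv' : (u : X) ≠ (v : X) := fun h => huv (Subtype.ext h)
    have := hpath u v huv' (p.map f.toHom)
      (p.map_isPath_of_injective hfinj hp)
    show d u v = _
    rw [this]
    simp only [walkMax, SimpleGraph.Walk.support_map, List.map_map]
    exact (congrArg (fun L => List.foldr max 0 (List.map l L))
      (SimpleGraph.Walk.support_map f.toHom p)).trans (by rw [List.map_map]; rfl)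
  exact ⟨htree', hgen', ⟨_, _, hgen'⟩⟩
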